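/- arXiv:math/0508190 — 7 statements merged into one kernel-verified Lean document; each statement's English description precedes it below -/
import Mathlib

section
/- For any real sequence x_1, ..., x_n with n ≥ 2, letting x̄_i = (x_1 + ... + x_i)/i and x̄_0 = 0, one has ∑_{i=1}^n x̄_{i-1} x_i = (1/2)∑_{i=2}^n (i/(i-1)) x̄_i² + (n/2) x̄_n² − (1/2)(x_1² + ∑_{i=2}^n x_i²/(i-1)). -/
theorem summation_by_parts_identity (n : ℕ) (hn : 2 ≤ n) (x : ℕ → ℝ)
    (xbar : ℕ → ℝ) (hxbar : ∀ i, xbar i = (∑ j ∈ Finset.Icc 1 i, x j) / i) :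
    ∑ i ∈ Finset.Icc 1 n, xbar (i - 1) * x i =
      (1 / 2) * ∑ i ∈ Finset.Icc 2 n, ((i : ℝ) / ((i : ℝ) - 1)) * (xbar i) ^ 2
      + ((n : ℝ) / 2) * (xbar n) ^ 2
      - (1 / 2) * ((x 1) ^ 2 + ∑ i ∈ Finset.Icc 2 n, (x i) ^ 2 / ((i : ℝ) - 1)) := by
  induction n, hn using Nat.le_induction with
  | base =>
    have h1 : Finset.Icc 1 2 = {1, 2} := rfl
    have h2 : Finset.Icc 2 2 = {2} := rfl
    have e0 : xbar 0 = 0 := by simp [hxbar]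
    have e1 : xbar 1 = x 1 := by simp [hxbar]
    have e2 : xbar 2 = (x 1 + x 2) / 2 := by
      rw [hxbar]; rw [h1]; norm_num
    rw [h1, h2]
    rw [Finset.sum_pair (by norm_num), Finset.sum_singleton, e0, e1, e2]
    norm_num
    ring
  | succ n hn ih =>
    have hne : (n : ℝ) ≠ 0 := by positivity
    have hne2 : (n : ℝ) + 1 ≠ 0 := by positivity
    have hrec : ((n : ℝ) + 1) * xbar (n + 1) = (n : ℝ) * xbar n + x (n + 1) := by
      rw [hxbar (n + 1), hxbar n, Finset.sum_Icc_succ_top (by omega)]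
      push_cast
      field_simp
    have hx : xbar (n + 1) = ((n : ℝ) * xbar n + x (n + 1)) / ((n : ℝ) + 1) := by
      rw [eq_div_iff hne2]; linarith
    rw [Finset.sum_Icc_succ_top (show 1 ≤ n + 1 by omega),
        Finset.sum_Icc_succ_top (show 2 ≤ n + 1 by omega),
        Finset.sum_Icc_succ_top (show 2 ≤ n + 1 by omega), ih]
    simp only [Nat.add_sub_cancel]
    rw [hx]
    push_cast
    rw [add_sub_cancel_right]
    field_simp
    ring
end

section
/- For any real sequence x_1, ..., x_n with n ≥ 2 and |x_i| ≤ 1 for all i, letting x̄_i be the average of the first i terms (x̄_0 = 0), one has ∑_{i=1}^n x̄_{i-1} x_i ≥ (1/2)∑_{i=1}^n x̄_i² + (n/2) x̄_n² − (1/2)(3 + log(n−1)). -/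
theorem summation_by_parts_lower_bound (n : ℕ) (hn : 2 ≤ n) (x : ℕ → ℝ)
    (hx : ∀ i, 1 ≤ i → i ≤ n → |x i| ≤ 1)
    (xbar : ℕ → ℝ) (hxbar : ∀ i, xbar i = (∑ j ∈ Finset.Icc 1 i, x j) / i) :
    ∑ i ∈ Finset.Icc 1 n, xbar (i - 1) * x i ≥
      (1 / 2) * ∑ i ∈ Finset.Icc 1 n, (xbar i) ^ 2
      + ((n : ℝ) / 2) * (xbar n) ^ 2
      - (1 / 2) * (3 + Real.log ((n : ℝ) - 1)) := by
  induction n, hn using Nat.le_induction with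
  | base =>
    have h0 : xbar 0 = 0 := by simp [hxbar]
    have h1 : xbar 1 = x 1 := by simp [hxbar]
    have h2 : xbar 2 = (x 1 + x 2) / 2 := by
      rw [hxbar]
      rw [show Finset.Icc 1 2 = {1, 2} from rfl]
      norm_num [Finset.sum_insert, Finset.sum_singleton]
    have hx1 := abs_le.mp (hx 1 (by norm_num) (by norm_num))
    have hx2 := abs_le.mp (hx 2 (by norm_num) (by norm_num))
    rw [show Finset.Icc 1 2 = {1, 2} from rfl]
    rw [Finset.sum_insert (by decide), Finset.sum_singleton,
        Finset.sum_insert (by decide), Finset.sum_singleton]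
    simp only [show (1:ℕ) - 1 = 0 from rfl, show (2:ℕ) - 1 = 1 from rfl, h0, h1, h2]
    norm_num [Real.log_one]
    nlinarith [sq_nonneg (x 1 + x 2), sq_nonneg (x 1 - x 2), hx1.1, hx1.2, hx2.1, hx2.2,
      mul_self_nonneg (1 - x 1), mul_self_nonneg (1 + x 1)]
  | succ n hn ih =>
    have IH := ih (fun i h1 h2 => hx i h1 (h2.trans (Nat.le_succ n)))
    have hNpos : (0:ℝ) < (n:ℝ) := by exact_mod_cast Nat.lt_of_lt_of_le Nat.zero_lt_two hn
    have hN2 : (2:ℝ) ≤ (n:ℝ) := by exact_mod_cast hn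
    -- sum splits
    have hs1 : ∑ i ∈ Finset.Icc 1 (n+1), xbar (i - 1) * x i
        = (∑ i ∈ Finset.Icc 1 n, xbar (i - 1) * x i) + xbar n * x (n+1) := by
      rw [Finset.sum_Icc_succ_top (by omega)]
      simp
    have hs2 : ∑ i ∈ Finset.Icc 1 (n+1), (xbar i) ^ 2
        = (∑ i ∈ Finset.Icc 1 n, (xbar i) ^ 2) + xbar (n+1) ^ 2 := by
      rw [Finset.sum_Icc_succ_top (by omega)]
    -- relation between xbar (n+1) and xbar n
    have hrel : ((n:ℝ)+1) * xbar (n+1) = (n:ℝ) * xbar n + x (n+1) := by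
      rw [hxbar (n+1), hxbar n, Finset.sum_Icc_succ_top (by omega)]
      push_cast
      field_simp
    -- bound on x (n+1)
    have hB : x (n+1) ^ 2 ≤ 1 := by
      have h := abs_le.mp (hx (n+1) (by omega) le_rfl)
      nlinarith [h.1, h.2]
    -- key step inequality
    have key : xbar n * x (n+1) ≥ (((n:ℝ)+2)/2) * xbar (n+1)^2
        - ((n:ℝ)/2) * xbar n ^ 2 - 1/(2*(n:ℝ)) := by
      have h1 : xbar (n+1) = ((n:ℝ) * xbar n + x (n+1)) / ((n:ℝ)+1) := by
        rw [← hrel]; field_simp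
      have hd : xbar n * x (n+1) - ((((n:ℝ)+2)/2) * xbar (n+1)^2
          - ((n:ℝ)/2) * xbar n ^ 2 - 1/(2*(n:ℝ)))
          = (((n:ℝ) * xbar n + x (n+1))^2 + ((n:ℝ)+1)^2 * (1 - x (n+1)^2))
            / (2*(n:ℝ)*((n:ℝ)+1)^2) := by
        rw [h1]; field_simp; ring
      have hpos : (0:ℝ) ≤ (((n:ℝ) * xbar n + x (n+1))^2 + ((n:ℝ)+1)^2 * (1 - x (n+1)^2))
            / (2*(n:ℝ)*((n:ℝ)+1)^2) := by
        apply div_nonneg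
        · nlinarith [sq_nonneg ((n:ℝ) * xbar n + x (n+1)), sq_nonneg ((n:ℝ)+1)]
        · positivity
      linarith [hd ▸ hpos]
    -- log bound
    have hlog : 1/(n:ℝ) ≤ Real.log (n:ℝ) - Real.log ((n:ℝ)-1) := by
      have h1 : (0:ℝ) < (n:ℝ) - 1 := by linarith
      have h2 := Real.log_le_sub_one_of_pos (show (0:ℝ) < ((n:ℝ)-1)/(n:ℝ) by positivity)
      rw [Real.log_div (by linarith) (by linarith)] at h2
      have : ((n:ℝ)-1)/(n:ℝ) - 1 = -(1/(n:ℝ)) := by field_simp; ring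
      linarith [this ▸ h2]
    rw [hs1, hs2]
    push_cast
    have hsub : ((n:ℝ) + 1) - 1 = (n:ℝ) := by ring
    rw [hsub]
    have he : 1/(2*(n:ℝ)) = (1/2) * (1/(n:ℝ)) := by ring
    linarith [key, IH, hlog, he ▸ key]
end

section
/- Let 0 < c ≤ 1/2 and let x_1, x_2, ... be a sequence of reals with |x_i| ≤ 1 for all i. Define x̄_0 = 0, x̄_i = (x_1+...+x_i)/i, and the capital process K_n = ∏_{i=1}^n (1 + c·x̄_{i−1}·x_i). Then K_n > 0 for all n and for all n ≥ 2, log K_n ≥ (c/2)·log n·(n·x̄_n²/log n − 1) − (3/2)c. -/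
lemma cplb_log_one_add_ge (t : ℝ) (ht : |t| ≤ 1/2) : t - t^2 ≤ Real.log (1+t) := by
  obtain ⟨h1, h2⟩ := abs_le.mp ht
  have hpos : (0:ℝ) < 1 + t := by linarith
  have key : 1 ≤ (1 + t) * Real.exp (t^2 - t) := by
    rcases le_or_gt 0 t with h0 | h0
    · nlinarith [Real.add_one_le_exp (t^2 - t), mul_nonneg (mul_nonneg h0 h0) h0]
    · have hu : 0 ≤ t^2 - t := by nlinarith
      have hq := Real.quadratic_le_exp_of_nonneg hu
      have hcube : 0 ≤ 1 + t - t^2 + t^3 := by nlinarith [sq_nonneg t, sq_nonneg (t + 1/2)]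
      nlinarith [mul_nonneg (sq_nonneg t) hcube, mul_le_mul_of_nonneg_left hq hpos.le]
  have hexp : Real.exp (t - t^2) ≤ 1 + t := by
    have hm : Real.exp (t - t^2) * Real.exp (t^2 - t) = 1 := by
      rw [← Real.exp_add]; norm_num
    nlinarith [Real.exp_pos (t - t^2), mul_le_mul_of_nonneg_left key (Real.exp_pos (t - t^2)).le]
  calc t - t^2 = Real.log (Real.exp (t - t^2)) := (Real.log_exp _).symm
    _ ≤ Real.log (1 + t) := Real.log_le_log (Real.exp_pos _) hexp

lemma cplb_harmonic_le (m : ℕ) : (∑ i ∈ Finset.Icc 1 m, (1:ℝ)/i) ≤ 1 + Real.log m := by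
  induction m with
  | zero => simp
  | succ k ih =>
    rcases Nat.eq_zero_or_pos k with rfl | hk
    · norm_num
    · rw [Finset.sum_Icc_succ_top (Nat.le_add_left 1 k)]
      have hk' : (0:ℝ) < k := by exact_mod_cast hk
      have h := Real.log_le_sub_one_of_pos (show (0:ℝ) < (k:ℝ)/(k+1) by positivity)
      rw [Real.log_div (by positivity) (by positivity)] at h
      have he : (k:ℝ)/(k+1) - 1 = -(1/(k+1)) := by field_simp; ring
      rw [he] at h
      push_cast
      linarith

lemma cplb_step (c m Sv y : ℝ) (hc0 : 0 < c) (hc1 : c ≤ 1/2) (hm1 : 1 ≤ m)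
    (_hS : |Sv| ≤ m) (hy : |y| ≤ 1) :
    c/2*(Sv+y)^2/(m+1) + c^2*(Sv+y)^2/(m+1)^2 - c/2 * (1/m)
      ≤ c/2*Sv^2/m + c^2*Sv^2/m^2 + (c*(Sv/m)*y - (c*(Sv/m)*y)^2) := by
  have hm0 : (0:ℝ) < m := by linarith
  have hy2 : y^2 ≤ 1 := by nlinarith [abs_le.mp hy]
  rw [← sub_nonneg]
  have hEq : c/2*Sv^2/m + c^2*Sv^2/m^2 + (c*(Sv/m)*y - (c*(Sv/m)*y)^2)
      - (c/2*(Sv+y)^2/(m+1) + c^2*(Sv+y)^2/(m+1)^2 - c/2 * (1/m))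
      = (c/2*m*(m+1)^2*(1-y^2) + c^2*(m+1)^2*Sv^2*(1-y^2)
         + c/2*m*(m+1-2*c*m)*(Sv+y)^2) / (m^2*(m+1)^2) := by
    field_simp
    ring
  rw [hEq]
  apply div_nonneg _ (by positivity)
  have h1 : 0 ≤ c/2*m*(m+1)^2*(1-y^2) := by
    apply mul_nonneg _ (by linarith)
    positivity
  have h2 : 0 ≤ c^2*(m+1)^2*Sv^2*(1-y^2) := by
    apply mul_nonneg _ (by linarith)
    positivity
  have h3 : 0 ≤ c/2*m*(m+1-2*c*m)*(Sv+y)^2 := by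
    apply mul_nonneg _ (sq_nonneg _)
    apply mul_nonneg (by positivity)
    nlinarith
  linarith

set_option maxHeartbeats 1000000 in
theorem capital_process_lower_bound (c : ℝ) (hc0 : 0 < c) (hc1 : c ≤ 1 / 2)
    (x : ℕ → ℝ) (hx : ∀ i, |x i| ≤ 1)
    (xbar : ℕ → ℝ) (hxbar : ∀ i, xbar i = (∑ j ∈ Finset.Icc 1 i, x j) / i)
    (K : ℕ → ℝ) (hK : ∀ n, K n = ∏ i ∈ Finset.Icc 1 n, (1 + c * xbar (i - 1) * x i)) :
    (∀ n, 0 < K n) ∧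
    ∀ n, 2 ≤ n → Real.log (K n) ≥
      (c / 2) * Real.log n * ((n : ℝ) * (xbar n) ^ 2 / Real.log n - 1) - (3 / 2) * c := by
  set S : ℕ → ℝ := fun i => ∑ j ∈ Finset.Icc 1 i, x j with hSdef
  have hSsucc : ∀ i : ℕ, S (i+1) = S i + x (i+1) := by
    intro i
    simp only [hSdef]
    rw [Finset.sum_Icc_succ_top (Nat.le_add_left 1 i)]
  have hSabs : ∀ i : ℕ, |S i| ≤ (i:ℝ) := by
    intro i
    induction i with
    | zero => simp [hSdef]
    | succ n ih =>
      rw [hSsucc]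
      calc |S n + x (n+1)| ≤ |S n| + |x (n+1)| := abs_add_le _ _
        _ ≤ (n:ℝ) + 1 := by have := hx (n+1); linarith
        _ = ((n+1 : ℕ) : ℝ) := by push_cast; ring
  have hxbarS : ∀ i : ℕ, xbar i = S i / i := fun i => hxbar i
  have hxbar0 : xbar 0 = 0 := by simp [hxbar 0]
  have hxbarabs : ∀ i : ℕ, |xbar i| ≤ 1 := by
    intro i
    rcases Nat.eq_zero_or_pos i with rfl | h
    · simp [hxbar0]
    · rw [hxbarS, abs_div, abs_of_nonneg (by positivity : (0:ℝ) ≤ (i:ℝ))]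
      rw [div_le_one (by exact_mod_cast h)]
      exact hSabs i
  have htabs : ∀ i : ℕ, |c * xbar (i-1) * x i| ≤ 1/2 := by
    intro i
    rw [abs_mul, abs_mul, abs_of_pos hc0, mul_assoc]
    have hab : |xbar (i-1)| * |x i| ≤ 1 :=
      mul_le_one₀ (hxbarabs (i-1)) (abs_nonneg _) (hx i)
    have := mul_le_mul_of_nonneg_left hab hc0.le
    linarith
  have hfpos : ∀ i : ℕ, 0 < 1 + c * xbar (i-1) * x i := by
    intro i; have := abs_le.mp (htabs i); linarith [this.1]
  have hKpos : ∀ n, 0 < K n := by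
    intro n; rw [hK]; exact Finset.prod_pos fun i _ => hfpos i
  refine ⟨hKpos, ?_⟩
  have hKsucc : ∀ n : ℕ, K (n+1) = K n * (1 + c * xbar n * x (n+1)) := by
    intro n
    rw [hK, hK, Finset.prod_Icc_succ_top (Nat.le_add_left 1 n)]
    norm_num
  -- main invariant
  have main : ∀ n : ℕ, 1 ≤ n →
      c/2 * (S n)^2 / n + c^2 * (S n)^2 / (n:ℝ)^2
        - c/2 * (∑ i ∈ Finset.Icc 1 (n-1), (1:ℝ)/i) - c ≤ Real.log (K n) := by
    intro n hn
    induction n, hn using Nat.le_induction with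
    | base =>
      have hK1 : K 1 = 1 := by
        rw [hK]
        simp [hxbar0]
      have hS1 : S 1 = x 1 := by simp [hSdef]
      have h1 := abs_le.mp (hx 1)
      have hx2 : (0:ℝ) ≤ 1 - (x 1)^2 := by nlinarith [h1.1, h1.2]
      rw [hK1, Real.log_one, hS1]
      norm_num
      nlinarith [mul_nonneg hc0.le hx2, mul_nonneg (mul_nonneg hc0.le hc0.le) hx2,
        mul_nonneg hc0.le (by linarith : (0:ℝ) ≤ 1/2 - c)]
    | succ n hn ih =>
      obtain ⟨k, rfl⟩ : ∃ k, n = k + 1 := ⟨n - 1, (Nat.succ_pred_eq_of_pos hn).symm⟩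
      set m : ℝ := ((k+1 : ℕ) : ℝ) with hmdef
      have hm1 : (1:ℝ) ≤ m := by
        rw [hmdef]; exact_mod_cast Nat.succ_le_succ (Nat.zero_le k)
      have hm0 : (0:ℝ) < m := by linarith
      set Sv : ℝ := S (k+1) with hSvdef
      set y : ℝ := x (k+2) with hydef
      have hSvabs : |Sv| ≤ m := hSabs (k+1)
      have hyabs : |y| ≤ 1 := hx (k+2)
      have hxb : xbar (k+1) = Sv / m := hxbarS (k+1)
      set t : ℝ := c * xbar (k+1) * y with htdef
      have hteq : t = c * (Sv/m) * y := by rw [htdef, hxb]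
      have hf : 0 < 1 + t := by
        have := hfpos (k+2)
        simpa [htdef, hydef, show (k+2) - 1 = k+1 from rfl] using this
      have hlogsucc : Real.log (K (k+2)) = Real.log (K (k+1)) + Real.log (1 + t) := by
        rw [show k+2 = (k+1)+1 from rfl, hKsucc (k+1), Real.log_mul (hKpos (k+1)).ne' hf.ne']
      have hlogt : t - t^2 ≤ Real.log (1 + t) := by
        apply cplb_log_one_add_ge
        have := htabs (k+2)
        simpa [htdef, hydef, show (k+2) - 1 = k+1 from rfl] using this
      have hsum : (∑ i ∈ Finset.Icc 1 (k+2-1), (1:ℝ)/i)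
          = (∑ i ∈ Finset.Icc 1 k, (1:ℝ)/i) + 1/m := by
        rw [show k+2-1 = k+1 from rfl, Finset.sum_Icc_succ_top (Nat.le_add_left 1 k)]
      have hST : S (k+2) = Sv + y := by
        rw [hSvdef, hydef, show k+2 = (k+1)+1 from rfl, hSsucc]
      have key := cplb_step c m Sv y hc0 hc1 hm1 hSvabs hyabs
      rw [← hteq] at key
      have hcast : ((k+1+1 : ℕ) : ℝ) = m + 1 := by rw [hmdef]; push_cast; ring
      calc c/2 * (S (k+1+1))^2 / ((k+1+1:ℕ):ℝ) + c^2 * (S (k+1+1))^2 / ((k+1+1:ℕ):ℝ)^2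
            - c/2 * (∑ i ∈ Finset.Icc 1 (k+1+1-1), (1:ℝ)/i) - c
          = c/2*(Sv+y)^2/(m+1) + c^2*(Sv+y)^2/(m+1)^2 - c/2 * (1/m)
            + (- (c/2) * (∑ i ∈ Finset.Icc 1 k, (1:ℝ)/i) - c) := by
            rw [hST, hcast, hsum]; ring
        _ ≤ c/2*Sv^2/m + c^2*Sv^2/m^2 + (t - t^2)
            + (- (c/2) * (∑ i ∈ Finset.Icc 1 k, (1:ℝ)/i) - c) := by linarith
        _ ≤ Real.log (K (k+1)) + Real.log (1+t) := by
            have ih' : c/2 * Sv^2 / m + c^2 * Sv^2 / m^2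
                - c/2 * (∑ i ∈ Finset.Icc 1 k, (1:ℝ)/i) - c ≤ Real.log (K (k+1)) := by
              simpa [hSvdef, hmdef] using ih
            linarith
        _ = Real.log (K (k+1+1)) := hlogsucc.symm
  -- conclusion
  intro n hn
  have h1n : 1 ≤ n := le_trans (by norm_num) hn
  have hmain := main n h1n
  have hn2 : (2:ℝ) ≤ (n:ℝ) := by exact_mod_cast hn
  have hL : 0 < Real.log n := Real.log_pos (by linarith)
  have harm : (∑ i ∈ Finset.Icc 1 (n-1), (1:ℝ)/i) ≤ 1 + Real.log n := by
    calc (∑ i ∈ Finset.Icc 1 (n-1), (1:ℝ)/i) ≤ 1 + Real.log (n-1 : ℕ) := cplb_harmonic_le _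
      _ ≤ 1 + Real.log n := by
        have hle : ((n-1 : ℕ):ℝ) ≤ (n:ℝ) := by
          exact_mod_cast Nat.sub_le n 1
        have hpos' : (0:ℝ) < ((n-1:ℕ):ℝ) := by
          have h1 : 1 ≤ n - 1 := by omega
          exact_mod_cast Nat.lt_of_lt_of_le Nat.zero_lt_one h1
        linarith [Real.log_le_log hpos' hle]
  have hA : (n:ℝ) * (xbar n)^2 = (S n)^2 / n := by
    rw [hxbarS]
    have hnpos : (0:ℝ) < (n:ℝ) := by linarith
    field_simp
  have hB : c/2 * Real.log n * ((S n)^2/(n:ℝ) / Real.log n - 1)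
      = c/2 * ((S n)^2/(n:ℝ)) - c/2 * Real.log n := by
    field_simp
  rw [ge_iff_le, hA, hB]
  have hsq : 0 ≤ c^2 * (S n)^2 / (n:ℝ)^2 := by positivity
  have hs : c/2 * (∑ i ∈ Finset.Icc 1 (n-1), (1:ℝ)/i) ≤ c/2 * (1 + Real.log n) :=
    mul_le_mul_of_nonneg_left harm (by linarith)
  have hre : c / 2 * (S n)^2 / (n:ℝ) = c/2 * ((S n)^2/(n:ℝ)) := by ring
  rw [hre] at hmain
  linarith [hmain, hsq, hs]
end

section
/- Let 0 < c ≤ 1/2 and let x_1, x_2, ... be reals with |x_i| ≤ 1 for all i. Define x̄_0 = 0, x̄_i = (x_1+...+x_i)/i, and K_n = ∏_{i=1}^n (1 + c·x̄_{i−1}·x_i). If limsup_n √n·|x̄_n|/√(log n) > 1, then limsup_n K_n = ∞. -/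
open Filter

lemma log_lb (u : ℝ) (h : |u| ≤ 1/2) : u - u^2 ≤ Real.log (1 + u) := by
  have h1 : -(1/2 : ℝ) ≤ u := (abs_le.mp h).1
  have h2 : u ≤ 1/2 := (abs_le.mp h).2
  have hpos : (0:ℝ) < 1 + u := by linarith
  rcases le_or_gt 0 u with hu | hu
  · have hlog : 1 - (1+u)⁻¹ ≤ Real.log (1+u) := by
      have := Real.log_le_sub_one_of_pos (inv_pos.mpr hpos)
      rw [Real.log_inv] at this
      linarith
    have hinv : (1+u)⁻¹ ≤ 1 - u + u^2 := by
      rw [inv_le_iff_one_le_mul₀ hpos]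
      nlinarith
    linarith
  · set s := -u with hs
    have hs0 : 0 < s := by simp only [hs]; linarith
    have hs2 : s ≤ 1/2 := by simp only [hs]; linarith
    have hexp : 1 + (s + s^2) + (s+s^2)^2/2 ≤ Real.exp (s + s^2) :=
      Real.quadratic_le_exp_of_nonneg (by positivity)
    have key : Real.exp (-(s + s^2)) ≤ 1 - s := by
      rw [Real.exp_neg, inv_le_iff_one_le_mul₀ (Real.exp_pos _)]
      nlinarith [Real.exp_pos (s+s^2)]
    have hlog := Real.log_le_log (Real.exp_pos _) key
    rw [Real.log_exp] at hlog
    have h1s : (1:ℝ) - s = 1 + u := by rw [hs]; ring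
    rw [h1s] at hlog
    nlinarith

lemma step_ineq (c A B A' N : ℝ) (hc0 : 0 < c) (hc1 : c ≤ 1/2)
    (hB : B^2 ≤ 1) (hN : 1 ≤ N)
    (hR : (N+1) * A' = N * A + B) :
    c/2 * ((N+2) * A'^2 - (N+1)*A^2 - 1/N) ≤ c*A*B - (c*A*B)^2 := by
  have hN0 : (0:ℝ) < N := by linarith
  have hN1 : (0:ℝ) < N + 1 := by linarith
  have hsq : (N+1)^2 * A'^2 = (N*A+B)^2 := by
    have := congrArg (fun z => z^2) hR
    simpa [mul_pow] using this
  have h1 : (0:ℝ) ≤ (N+1)^2 * (1 - B^2) := by nlinarith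
  have h2 : (0:ℝ) ≤ N*(N+1)^2 * (A^2 - A^2*B^2) := by
    apply mul_nonneg (by positivity)
    nlinarith [sq_nonneg A]
  have h3 : (0:ℝ) ≤ (1 - 2*c) * (N*(N+1)^2*(A^2*B^2)) := by
    apply mul_nonneg (by linarith) (by positivity)
  have h4 : (0:ℝ) ≤ (N*A+B)^2 := sq_nonneg _
  have main : N*(N+2)*((N*A+B)^2) - N*(N+1)^3*A^2 - (N+1)^2
      ≤ N*(N+1)^2*(2*A*B - 2*c*(A*B)^2) := by nlinarith [h1, h2, h3, h4]
  have expand : c/2 * ((N+2) * A'^2 - (N+1)*A^2 - 1/N)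
      = c / (2*N*(N+1)^2) * (N*(N+2)*((N+1)^2*A'^2) - N*(N+1)^3*A^2 - (N+1)^2) := by
    field_simp
  rw [expand, hsq]
  have hc2 : 0 < c / (2*N*(N+1)^2) := by positivity
  calc c / (2*N*(N+1)^2) * (N*(N+2)*((N*A+B)^2) - N*(N+1)^3*A^2 - (N+1)^2)
      ≤ c / (2*N*(N+1)^2) * (N*(N+1)^2*(2*A*B - 2*c*(A*B)^2)) :=
        mul_le_mul_of_nonneg_left main hc2.le
    _ = c*A*B - (c*A*B)^2 := by field_simp

theorem weakly_forcing_slln (c : ℝ) (hc0 : 0 < c) (hc1 : c ≤ 1 / 2)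
    (x : ℕ → ℝ) (hx : ∀ i, |x i| ≤ 1)
    (xbar : ℕ → ℝ) (hxbar : ∀ i, xbar i = (∑ j ∈ Finset.Icc 1 i, x j) / i)
    (K : ℕ → ℝ) (hK : ∀ n, K n = ∏ i ∈ Finset.Icc 1 n, (1 + c * xbar (i - 1) * x i))
    (hls : Filter.atTop.limsup
      (fun n : ℕ => ((Real.sqrt n * |xbar n| / Real.sqrt (Real.log n) : ℝ) : EReal)) > 1) :
    Filter.atTop.limsup (fun n : ℕ => ((K n : ℝ) : EReal)) = ⊤ := by
  -- basic facts
  have habs : ∀ n, |xbar n| ≤ 1 := by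
    intro n
    rcases Nat.eq_zero_or_pos n with h0 | h0
    · subst h0; rw [hxbar]; simp
    · rw [hxbar, abs_div]
      rw [div_le_one (by positivity : (0:ℝ) < |(n:ℝ)|)]
      calc |∑ j ∈ Finset.Icc 1 n, x j| ≤ ∑ j ∈ Finset.Icc 1 n, |x j| :=
            Finset.abs_sum_le_sum_abs _ _
        _ ≤ ∑ _j ∈ Finset.Icc 1 n, (1:ℝ) := Finset.sum_le_sum (fun i _ => hx i)
        _ = n := by simp
        _ ≤ |(n:ℝ)| := le_abs_self _
  have hfac : ∀ n, (1:ℝ)/2 ≤ 1 + c * xbar (n-1) * x n := by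
    intro n
    have : |c * xbar (n-1) * x n| ≤ 1/2 := by
      rw [abs_mul, abs_mul, abs_of_pos hc0]
      calc c * |xbar (n-1)| * |x n| ≤ c * 1 * 1 := by
            apply mul_le_mul (mul_le_mul_of_nonneg_left (habs _) hc0.le) (hx n)
              (abs_nonneg _) (by positivity)
        _ ≤ 1/2 := by linarith
    have := (abs_le.mp this).1
    linarith
  have hKpos : ∀ n, 0 < K n := by
    intro n
    rw [hK]
    apply Finset.prod_pos
    intro i _
    linarith [hfac i]
  have hKrec : ∀ n, K (n+1) = K n * (1 + c * xbar n * x (n+1)) := by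
    intro n
    rw [hK, hK, Finset.prod_Icc_succ_top (Nat.le_add_left 1 n)]
    simp
  have hRel : ∀ n : ℕ, 1 ≤ n → ((n:ℝ)+1) * xbar (n+1) = (n:ℝ) * xbar n + x (n+1) := by
    intro n hn
    have hn0 : ((n:ℝ)) ≠ 0 := Nat.cast_ne_zero.mpr (by omega)
    have hn1 : ((n:ℝ)+1) ≠ 0 := by positivity
    rw [hxbar, hxbar, Finset.sum_Icc_succ_top (Nat.le_add_left 1 n)]
    push_cast
    field_simp
  -- the main invariant
  have hinv : ∀ n : ℕ, 1 ≤ n →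
      c/2 * (((n:ℝ)+1) * xbar n ^ 2 - 3 - Real.log n + 1/n) ≤ Real.log (K n) := by
    intro n hn
    induction n, hn using Nat.le_induction with
    | base =>
      have hK1 : K 1 = 1 := by
        rw [hK]
        have hx0 : xbar 0 = 0 := by rw [hxbar]; simp
        simp [hx0]
      rw [hK1, Real.log_one]
      have h2 : xbar 1 ^ 2 ≤ 1 := (sq_le_one_iff_abs_le_one _).mpr (habs 1)
      push_cast
      rw [Real.log_one]
      nlinarith
    | succ n hn IH =>
      have hn0 : (0:ℝ) < n := by exact_mod_cast hn
      have hn1 : (0:ℝ) < (n:ℝ) + 1 := by linarith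
      -- log increment bound
      have hE : 1/((n:ℝ)+1) ≤ Real.log ((n:ℝ)+1) - Real.log n := by
        have h := Real.log_le_sub_one_of_pos (show (0:ℝ) < (n:ℝ)/((n:ℝ)+1) by positivity)
        rw [Real.log_div hn0.ne' hn1.ne'] at h
        have : (n:ℝ)/((n:ℝ)+1) - 1 = -(1/((n:ℝ)+1)) := by field_simp; ring
        rw [this] at h
        linarith
      -- factor bound
      have hu : |c * xbar n * x (n+1)| ≤ 1/2 := by
        have := hfac (n+1)
        rw [abs_mul, abs_mul, abs_of_pos hc0]
        calc c * |xbar n| * |x (n+1)| ≤ c * 1 * 1 := by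
              apply mul_le_mul (mul_le_mul_of_nonneg_left (habs _) hc0.le) (hx _)
                (abs_nonneg _) (by positivity)
          _ ≤ 1/2 := by linarith
      have hlogf : c * xbar n * x (n+1) - (c * xbar n * x (n+1))^2
          ≤ Real.log (1 + c * xbar n * x (n+1)) := log_lb _ hu
      have hstep := step_ineq c (xbar n) (x (n+1)) (xbar (n+1)) n hc0 hc1
        ((sq_le_one_iff_abs_le_one _).mpr (hx (n+1)))
        (by exact_mod_cast hn) (hRel n hn)
      have hf : (1:ℝ)/2 ≤ 1 + c * xbar n * x (n+1) := by simpa using hfac (n+1)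
      have hKsplit : Real.log (K (n+1))
          = Real.log (K n) + Real.log (1 + c * xbar n * x (n+1)) := by
        rw [hKrec n, Real.log_mul (hKpos n).ne' (by linarith : (1:ℝ) + c * xbar n * x (n+1) ≠ 0)]
      have hEc : c/2 * (1/((n:ℝ)+1)) ≤ c/2 * (Real.log ((n:ℝ)+1) - Real.log n) :=
        mul_le_mul_of_nonneg_left hE (by positivity)
      push_cast
      rw [hKsplit]
      nlinarith [IH, hstep, hlogf, hEc]
  -- extract a real r > 1 below the limsup
  obtain ⟨r, hr1, hrls⟩ := exists_between hls
  have hrtop : r ≠ ⊤ := hrls.ne_top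
  have hrbot : r ≠ ⊥ := by
    intro h; rw [h] at hr1; exact (not_lt_bot hr1).elim
  lift r to ℝ using ⟨hrtop, hrbot⟩
  have hr1' : (1:ℝ) < r := by exact_mod_cast hr1
  have hfreq := frequently_lt_of_lt_limsup (by isBoundedDefault) hrls
  rw [EReal.eq_top_iff_forall_lt]
  intro M
  -- eventual threshold
  have htend : Tendsto (fun n : ℕ => c/2 * ((r^2-1) * Real.log n - 3)) atTop atTop := by
    apply Filter.Tendsto.const_mul_atTop (by positivity : (0:ℝ) < c/2)
    apply Filter.tendsto_atTop_add_const_right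
    apply Filter.Tendsto.const_mul_atTop (by nlinarith : (0:ℝ) < r^2 - 1)
    exact Real.tendsto_log_atTop.comp tendsto_natCast_atTop_atTop
  have hev : ∀ᶠ n : ℕ in atTop,
      M + 1 ≤ c/2 * ((r^2-1) * Real.log n - 3) ∧ 2 ≤ n :=
    (htend.eventually_ge_atTop (M+1)).and (eventually_ge_atTop 2)
  have hfin : ∃ᶠ n : ℕ in atTop, ((M:ℝ)+1 : ℝ) ≤ K n := by
    apply (hfreq.and_eventually hev).mono
    rintro n ⟨hlt, hth, hn2⟩
    have hn1 : 1 ≤ n := by omega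
    have hn0 : (0:ℝ) < n := by
      have : (2:ℝ) ≤ n := by exact_mod_cast hn2
      linarith
    have hlogn : 0 < Real.log n := by
      apply Real.log_pos
      have : (2:ℝ) ≤ n := by exact_mod_cast hn2
      linarith
    have hlt' : r < Real.sqrt n * |xbar n| / Real.sqrt (Real.log n) := by
      exact_mod_cast hlt
    have hsq : r^2 * Real.log n < (n:ℝ) * xbar n ^ 2 := by
      have hs : 0 < Real.sqrt (Real.log n) := Real.sqrt_pos.mpr hlogn
      rw [lt_div_iff₀ hs] at hlt'
      have hr0 : 0 ≤ r * Real.sqrt (Real.log n) := by positivity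
      calc r^2 * Real.log n
          = (r * Real.sqrt (Real.log n))^2 := by
            rw [mul_pow, Real.sq_sqrt hlogn.le]
        _ < (Real.sqrt n * |xbar n|)^2 := by
            exact pow_lt_pow_left₀ hlt' hr0 (by norm_num)
        _ = (n:ℝ) * xbar n ^ 2 := by
            rw [mul_pow, Real.sq_sqrt hn0.le, sq_abs]
    have hlogK : M + 1 ≤ Real.log (K n) := by
      have h1 := hinv n hn1
      have h2 : c/2 * ((r^2-1) * Real.log n - 3)
          ≤ c/2 * (((n:ℝ)+1) * xbar n ^ 2 - 3 - Real.log n + 1/n) := by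
        apply mul_le_mul_of_nonneg_left _ (by positivity : (0:ℝ) ≤ c/2)
        have hx2 : 0 ≤ xbar n ^ 2 := sq_nonneg _
        have h1n : 0 ≤ 1/(n:ℝ) := by positivity
        nlinarith
      linarith
    have : Real.exp (M+1) ≤ K n := by
      rw [← Real.exp_log (hKpos n)]
      exact Real.exp_le_exp.mpr hlogK
    linarith [Real.add_one_le_exp (M+1)]
  have : ((M+1 : ℝ) : EReal) ≤ atTop.limsup (fun n : ℕ => ((K n : ℝ) : EReal)) := by
    apply le_limsup_of_frequently_le'
    apply hfin.mono
    intro n hn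
    exact_mod_cast hn
  refine lt_of_lt_of_le ?_ this
  exact_mod_cast (lt_add_one M)
end

section
/- Let 0 < c ≤ 1/2 and let x_1, x_2, ... be reals with |x_i| ≤ 1. Define x̄_i as the running average (x̄_0 = 0) and K_n = ∏_{i=1}^n (1 + c·x̄_{i−1}·x_i). If the sequence K_n is bounded above, then limsup_n √n·|x̄_n|/√(log n) ≤ 1; in particular x̄_n → 0. -/
open Filter

private lemma core_ineq (a ξ u : ℝ) (ha : a^2 ≤ 1) (hξ : ξ^2 ≤ 1) (hu : 101 ≤ u) :
    0 ≤ a*ξ*u + (u-1)*a^2*u/2 + (1-ξ^2)*u/2 + 5 - (2/5)*(a^2*ξ^2)*u^2 := by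
  nlinarith [sq_nonneg (a*u + 6*ξ),
    mul_nonneg (mul_nonneg (sq_nonneg a) (by linarith : (0:ℝ) ≤ u)) (by linarith : (0:ℝ) ≤ u - 101),
    mul_nonneg (by linarith : (0:ℝ) ≤ 1 - ξ^2) (by linarith : (0:ℝ) ≤ u),
    mul_nonneg (sq_nonneg (a*u)) (by linarith : (0:ℝ) ≤ 1 - ξ^2),
    mul_nonneg (sq_nonneg a) (by linarith : (0:ℝ) ≤ u)]

private lemma log_lb_s7 {y : ℝ} (h1 : -(1/2) ≤ y) (h2 : y ≤ 1/2) :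
    y - (4/5)*y^2 ≤ Real.log (1+y) := by
  set f : ℝ → ℝ := fun s => Real.log (1+s) - s + (4/5)*s^2 with hf
  have key : ∀ t : ℝ, -1 < t → HasDerivAt f ((1+t)⁻¹ - 1 + (8/5)*t) t := by
    intro t ht
    have h0 : HasDerivAt (fun s : ℝ => 1 + s) 1 t := by
      simpa using (hasDerivAt_id t).const_add (1:ℝ)
    have hne : (1:ℝ) + t ≠ 0 := by linarith
    have hl : HasDerivAt (fun s => Real.log (1+s)) (1/(1+t)) t := h0.log hne
    have hp : HasDerivAt (fun s : ℝ => (4/5)*s^2) ((4/5)*(2*t)) t := by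
      simpa using (hasDerivAt_pow 2 t).const_mul (4/5:ℝ)
    have := (hl.sub (hasDerivAt_id t)).add hp
    have e : ((1+t)⁻¹ - 1 + (8/5)*t) = 1/(1+t) - 1 + 4/5*(2*t) := by rw [inv_eq_one_div]; ring
    rw [e]; exact this
  have hderiv : ∀ t : ℝ, -1 < t → deriv f t = (t*(8*t+3))/(5*(1+t)) := by
    intro t ht
    rw [(key t ht).deriv]
    have hne : (1:ℝ) + t ≠ 0 := by linarith
    field_simp
    ring
  have hcont : ∀ a b : ℝ, -1 < a → ContinuousOn f (Set.Icc a b) := by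
    intro a b hab
    intro t ht
    exact ((key t (by have := ht.1; linarith)).continuousAt).continuousWithinAt
  have hdiff : ∀ a b : ℝ, -1 < a → DifferentiableOn ℝ f (interior (Set.Icc a b)) := by
    intro a b hab t ht
    rw [interior_Icc] at ht
    exact ((key t (by have := ht.1; linarith)).differentiableAt).differentiableWithinAt
  have hf0 : f 0 = 0 := by simp [hf]
  rcases le_or_gt 0 y with hy | hy
  · -- monotone on [0, 1/2]
    have hmono : MonotoneOn f (Set.Icc (0:ℝ) (1/2)) := by
      apply monotoneOn_of_deriv_nonneg (convex_Icc _ _) (hcont _ _ (by norm_num))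
        (hdiff _ _ (by norm_num))
      intro t ht
      rw [interior_Icc] at ht
      rw [hderiv t (by linarith [ht.1])]
      apply div_nonneg
      · nlinarith [ht.1, ht.2]
      · nlinarith [ht.1]
    have := hmono (Set.mem_Icc.2 ⟨le_refl 0, by norm_num⟩) (Set.mem_Icc.2 ⟨hy, h2⟩) hy
    rw [hf0] at this
    simp only [hf] at this
    linarith
  · rcases le_or_gt (-(3/8) : ℝ) y with hy3 | hy3
    · -- antitone on [-3/8, 0]
      have hanti : AntitoneOn f (Set.Icc (-(3/8):ℝ) 0) := by
        apply antitoneOn_of_deriv_nonpos (convex_Icc _ _) (hcont _ _ (by norm_num))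
          (hdiff _ _ (by norm_num))
        intro t ht
        rw [interior_Icc] at ht
        rw [hderiv t (by linarith [ht.1])]
        apply div_nonpos_of_nonpos_of_nonneg
        · nlinarith [ht.1, ht.2]
        · nlinarith [ht.1]
      have := hanti (Set.mem_Icc.2 ⟨hy3, hy.le⟩) (Set.mem_Icc.2 ⟨by norm_num, le_refl 0⟩) hy.le
      rw [hf0] at this
      simp only [hf] at this
      linarith
    · -- monotone on [-1/2, -3/8], f(-1/2) ≥ 0
      have hmono : MonotoneOn f (Set.Icc (-(1/2):ℝ) (-(3/8))) := by
        apply monotoneOn_of_deriv_nonneg (convex_Icc _ _) (hcont _ _ (by norm_num))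
          (hdiff _ _ (by norm_num))
        intro t ht
        rw [interior_Icc] at ht
        rw [hderiv t (by linarith [ht.1])]
        apply div_nonneg
        · nlinarith [ht.1, ht.2]
        · nlinarith [ht.1]
      have hle := hmono (Set.mem_Icc.2 ⟨le_refl _, by linarith⟩)
        (Set.mem_Icc.2 ⟨h1, hy3.le⟩) h1
      have hval : (0:ℝ) ≤ f (-(1/2)) := by
        have hl2 : Real.log (1 + -(1/2)) = -Real.log 2 := by
          rw [show (1:ℝ) + -(1/2) = (2:ℝ)⁻¹ by norm_num, Real.log_inv]
        have := Real.log_two_lt_d9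
        simp only [hf, hl2]
        norm_num
        linarith
      have : (0:ℝ) ≤ f y := le_trans hval hle
      simp only [hf] at this
      linarith
set_option maxHeartbeats 1000000 in
theorem bounded_capital_implies_slln (c : ℝ) (hc0 : 0 < c) (hc1 : c ≤ 1 / 2)
    (x : ℕ → ℝ) (hx : ∀ i, |x i| ≤ 1)
    (xbar : ℕ → ℝ) (hxbar : ∀ i, xbar i = (∑ j ∈ Finset.Icc 1 i, x j) / i)
    (K : ℕ → ℝ) (hK : ∀ n, K n = ∏ i ∈ Finset.Icc 1 n, (1 + c * xbar (i - 1) * x i))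
    (hbdd : ∃ B : ℝ, ∀ n, K n ≤ B) :
    Filter.atTop.limsup
      (fun n : ℕ => ((Real.sqrt n * |xbar n| / Real.sqrt (Real.log n) : ℝ) : EReal)) ≤ 1 ∧
    Filter.Tendsto xbar Filter.atTop (nhds 0) := by
  obtain ⟨B, hB⟩ := hbdd
  -- partial sums
  have hSabs : ∀ n : ℕ, |∑ j ∈ Finset.Icc 1 n, x j| ≤ n := by
    intro n
    induction n with
    | zero => simp
    | succ n ih =>
      rw [Finset.sum_Icc_succ_top (by omega)]
      push_cast
      calc |(∑ j ∈ Finset.Icc 1 n, x j) + x (n+1)| ≤ |∑ j ∈ Finset.Icc 1 n, x j| + |x (n+1)| :=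
            abs_add_le _ _
        _ ≤ n + 1 := by have := hx (n+1); linarith
  have hxbarabs : ∀ n : ℕ, |xbar n| ≤ 1 := by
    intro n
    rcases Nat.eq_zero_or_pos n with h | h
    · subst h; simp [hxbar 0]
    · have hn0 : (0:ℝ) < n := by exact_mod_cast h
      rw [hxbar n, abs_div, abs_of_pos hn0, div_le_one hn0]
      exact hSabs n
  have hxbarsq : ∀ n : ℕ, xbar n ^ 2 ≤ 1 := by
    intro n
    have := abs_le.1 (hxbarabs n)
    nlinarith [this.1, this.2]
  -- factor bounds
  have hy : ∀ n : ℕ, |c * xbar n * x (n+1)| ≤ 1/2 := by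
    intro n
    rw [abs_mul, abs_mul, abs_of_pos hc0]
    have h1 := hxbarabs n
    have h2 := hx (n+1)
    have t1 : c * |xbar n| * |x (n+1)| ≤ c * |xbar n| :=
      mul_le_of_le_one_right (by positivity) h2
    have t2 : c * |xbar n| ≤ c := mul_le_of_le_one_right hc0.le h1
    linarith
  -- recurrence for K
  have hKrec : ∀ n : ℕ, K (n+1) = K n * (1 + c * xbar n * x (n+1)) := by
    intro n
    rw [hK, hK, Finset.prod_Icc_succ_top (by omega)]
    simp
  have hKlb : ∀ n : ℕ, (1/2:ℝ)^n ≤ K n := by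
    intro n
    induction n with
    | zero => rw [hK]; simp
    | succ n ih =>
      rw [hKrec n, pow_succ]
      have h05 : (1:ℝ)/2 ≤ 1 + c * xbar n * x (n+1) := by
        have := abs_le.1 (hy n); linarith [this.1]
      have hpos : (0:ℝ) < K n := lt_of_lt_of_le (by positivity) ih
      exact mul_le_mul ih h05 (by norm_num) hpos.le
  have hKpos : ∀ n : ℕ, 0 < K n := fun n => lt_of_lt_of_le (by positivity) (hKlb n)
  -- main invariant
  have hQ : ∀ n : ℕ, 100 ≤ n →
      (c/2) * ((n:ℝ) * xbar n ^ 2) ≤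
        Real.log (K n) + (c/2) * Real.log n - 5*c/n + (100 * Real.log 2 + 51 * c) := by
    refine Nat.le_induction ?_ ?_
    · -- base case n = 100
      have hlogK : Real.log ((1/2:ℝ)^100) ≤ Real.log (K 100) :=
        Real.log_le_log (by positivity) (hKlb 100)
      rw [Real.log_pow, show ((1:ℝ)/2) = (2:ℝ)⁻¹ by norm_num, Real.log_inv] at hlogK
      have hlog100 : (0:ℝ) ≤ Real.log ((100:ℕ):ℝ) := Real.log_nonneg (by norm_num)
      have hxb := hxbarsq 100
      push_cast at hlogK hlog100 ⊢
      nlinarith [hc0]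
    · -- inductive step
      intro n hn ih
      set N : ℝ := (n:ℝ) with hN
      have hN100 : (100:ℝ) ≤ N := by rw [hN]; exact_mod_cast hn
      have hN0 : (0:ℝ) < N := by linarith
      have hNp1 : (0:ℝ) < N + 1 := by linarith
      set a : ℝ := xbar n with ha
      set ξ : ℝ := x (n+1) with hξ
      have ha2 : a^2 ≤ 1 := hxbarsq n
      have hξ2 : ξ^2 ≤ 1 := by
        have := abs_le.1 (hx (n+1)); nlinarith [this.1, this.2]
      -- p1 : log K (n+1) = log K n + log (1 + y)
      have hfac : (0:ℝ) < 1 + c * a * ξ := by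
        have := abs_le.1 (hy n); linarith [this.1]
      have p1 : Real.log (K (n+1)) = Real.log (K n) + Real.log (1 + c * a * ξ) := by
        rw [hKrec n, Real.log_mul (hKpos n).ne' hfac.ne']
      -- p2 : log lower bound
      have p2 : c*a*ξ - (4/5)*(c*a*ξ)^2 ≤ Real.log (1 + c*a*ξ) := by
        have := abs_le.1 (hy n)
        exact log_lb_s7 this.1 this.2
      -- p3 : log (n+1) - log n ≥ 1/(N+1)
      have p3 : 1/(N+1) ≤ Real.log (N+1) - Real.log N := by
        have h := Real.log_le_sub_one_of_pos (show (0:ℝ) < N/(N+1) by positivity)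
        rw [Real.log_div hN0.ne' hNp1.ne'] at h
        have : N/(N+1) - 1 = -(1/(N+1)) := by field_simp; ring
        linarith [this ▸ h]
      -- p4 : telescoping of 5c/n
      have p4 : 5*c/(N+1)^2 ≤ 5*c/N - 5*c/(N+1) := by
        have he : 5*c/N - 5*c/(N+1) = 5*c/(N*(N+1)) := by field_simp; ring
        rw [he]
        apply div_le_div_of_nonneg_left (by linarith) (by positivity)
        nlinarith
      -- xbar (n+1) in terms of a, ξ
      have hSn : (∑ j ∈ Finset.Icc 1 n, x j) = N * a := by
        have := hxbar n
        rw [ha, this]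
        field_simp
        rw [hN]
      have hxb1 : xbar (n+1) = (N*a + ξ)/(N+1) := by
        rw [hxbar (n+1), Finset.sum_Icc_succ_top (by omega), hSn, ← hξ]
        push_cast
        rw [← hN]
      -- key algebraic inequality
      have key : (c/2) * ((N+1) * xbar (n+1)^2 - N * a^2) ≤
          c*a*ξ - (4/5)*(c*a*ξ)^2 + (c/2)*(1/(N+1)) + 5*c/(N+1)^2 := by
        rw [hxb1]
        have hcore := core_ineq a ξ (N+1) ha2 hξ2 (by linarith)
        have h45 : (4/5)*(c*a*ξ)^2 ≤ (2/5)*c*(a^2*ξ^2) := by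
          nlinarith [mul_nonneg (sq_nonneg a) (sq_nonneg ξ),
            mul_nonneg (mul_nonneg hc0.le (mul_nonneg (sq_nonneg a) (sq_nonneg ξ)))
              (by linarith : (0:ℝ) ≤ 1 - 2*c)]
        have hident : c*a*ξ - (2/5)*c*(a^2*ξ^2) + (c/2)*(1/(N+1)) + 5*c/(N+1)^2
            - (c/2)*((N+1)*((N*a+ξ)/(N+1))^2 - N*a^2)
            = (c/(N+1)^2) * (a*ξ*(N+1) + ((N+1)-1)*a^2*(N+1)/2 + (1-ξ^2)*(N+1)/2 + 5
               - (2/5)*(a^2*ξ^2)*(N+1)^2) := by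
          field_simp
          ring
        have hpos : 0 ≤ (c/(N+1)^2) * (a*ξ*(N+1) + ((N+1)-1)*a^2*(N+1)/2 + (1-ξ^2)*(N+1)/2 + 5
               - (2/5)*(a^2*ξ^2)*(N+1)^2) := mul_nonneg (by positivity) hcore
        linarith [hident ▸ hpos]
      -- assemble
      have hcast1 : ((n+1:ℕ):ℝ) = N + 1 := by push_cast; ring
      rw [hcast1]
      have ihn : (c/2) * (N * a^2) ≤
          Real.log (K n) + (c/2) * Real.log N - 5*c/N + (100 * Real.log 2 + 51 * c) := ih
      linarith [p1, p2, p3, p4, key,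
        mul_le_mul_of_nonneg_left p3 (by positivity : (0:ℝ) ≤ c/2)]
  -- consequence: n x̄² ≤ log n + C₀
  set C₀ : ℝ := max ((2/c) * Real.log B + (200 * Real.log 2)/c + 102) 0 with hC₀
  have hC₀0 : 0 ≤ C₀ := le_max_right _ _
  have hC : ∀ n : ℕ, 100 ≤ n → (n:ℝ) * xbar n ^ 2 ≤ Real.log n + C₀ := by
    intro n hn
    have hq := hQ n hn
    have hN0 : (0:ℝ) < n := by exact_mod_cast (by omega : 0 < n)
    have hKB : Real.log (K n) ≤ Real.log B := Real.log_le_log (hKpos n) (hB n)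
    have h5 : (0:ℝ) < 5*c/n := by positivity
    have hmul : (n:ℝ) * xbar n ^ 2 = (2/c) * ((c/2) * ((n:ℝ) * xbar n ^ 2)) := by
      field_simp
    have hstep : (c/2) * ((n:ℝ) * xbar n ^ 2) ≤
        Real.log B + (c/2) * Real.log n + (100 * Real.log 2 + 51 * c) := by linarith
    have hexp : (2/c) * (Real.log B + (c/2) * Real.log n + (100 * Real.log 2 + 51 * c))
        = Real.log n + ((2/c) * Real.log B + (200 * Real.log 2)/c + 102) := by
      field_simp
      ring
    have := mul_le_mul_of_nonneg_left hstep (by positivity : (0:ℝ) ≤ 2/c)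
    rw [hexp] at this
    rw [hmul]
    exact le_trans this (by linarith [le_max_left ((2/c) * Real.log B + (200 * Real.log 2)/c + 102) (0:ℝ)])
  -- Tendsto xbar → 0
  have hlogdivn : Tendsto (fun n : ℕ => Real.log n / n) atTop (nhds 0) := by
    have h := Real.tendsto_pow_log_div_mul_add_atTop 1 0 1 one_ne_zero
    simp only [pow_one, one_mul, add_zero] at h
    exact h.comp tendsto_natCast_atTop_atTop
  have hCdivn : Tendsto (fun n : ℕ => C₀ / (n:ℝ)) atTop (nhds 0) :=
    Tendsto.div_atTop tendsto_const_nhds tendsto_natCast_atTop_atTop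
  have hg : Tendsto (fun n : ℕ => (Real.log n + C₀) / n) atTop (nhds 0) := by
    have := hlogdivn.add hCdivn
    simp only [add_zero] at this
    convert this using 2 with n
    rw [add_div]
  have hsq0 : Tendsto (fun n : ℕ => xbar n ^ 2) atTop (nhds 0) := by
    have hbound : ∀ᶠ n : ℕ in atTop, xbar n ^ 2 ≤ (Real.log n + C₀) / n := by
      filter_upwards [eventually_ge_atTop 100] with n hn
      have hN0 : (0:ℝ) < n := by exact_mod_cast (by omega : 0 < n)
      rw [le_div_iff₀ hN0]
      nlinarith [hC n hn]
    exact squeeze_zero' (Eventually.of_forall (fun n => sq_nonneg _)) hbound hg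
  have htend : Tendsto xbar atTop (nhds 0) := by
    have habs : Tendsto (fun n : ℕ => |xbar n|) atTop (nhds 0) := by
      have h := (Real.continuous_sqrt.tendsto 0).comp hsq0
      rw [Real.sqrt_zero] at h
      convert h using 2 with n
      exact (Real.sqrt_sq_eq_abs _).symm
    have hneg := habs.neg
    rw [neg_zero] at hneg
    apply tendsto_of_tendsto_of_tendsto_of_le_of_le hneg habs
    · exact fun n => neg_abs_le _
    · exact fun n => le_abs_self _
  refine ⟨?_, htend⟩
  -- limsup bound
  have hloglim : Tendsto (fun n : ℕ => Real.log n) atTop atTop :=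
    Real.tendsto_log_atTop.comp tendsto_natCast_atTop_atTop
  have hev : ∀ᶠ n : ℕ in atTop,
      ((Real.sqrt n * |xbar n| / Real.sqrt (Real.log n) : ℝ) : EReal) ≤
        ((Real.sqrt (1 + C₀ / Real.log n) : ℝ) : EReal) := by
    filter_upwards [eventually_ge_atTop 100] with n hn
    rw [EReal.coe_le_coe_iff]
    have hN1 : (1:ℝ) < n := by
      have : (100:ℝ) ≤ n := by exact_mod_cast hn
      linarith
    have hlogpos : 0 < Real.log n := Real.log_pos hN1
    have e1 : Real.sqrt n * |xbar n| = Real.sqrt ((n:ℝ) * xbar n ^ 2) := by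
      rw [Real.sqrt_mul (by positivity), Real.sqrt_sq_eq_abs]
    rw [e1, ← Real.sqrt_div (by positivity)]
    apply Real.sqrt_le_sqrt
    rw [div_le_iff₀ hlogpos]
    have : (1 + C₀ / Real.log n) * Real.log n = Real.log n + C₀ := by
      field_simp
    rw [this]
    exact hC n hn
  have hlim : Tendsto (fun n : ℕ => ((Real.sqrt (1 + C₀ / Real.log n) : ℝ) : EReal)) atTop
      (nhds (1:EReal)) := by
    rw [show (1:EReal) = ((1:ℝ):EReal) by norm_num]
    rw [EReal.tendsto_coe]
    have h1 : Tendsto (fun n : ℕ => C₀ / Real.log n) atTop (nhds 0) :=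
      Tendsto.div_atTop tendsto_const_nhds hloglim
    have h2 : Tendsto (fun n : ℕ => 1 + C₀ / Real.log n) atTop (nhds 1) := by
      have := (tendsto_const_nhds : Tendsto (fun _ : ℕ => (1:ℝ)) atTop (nhds 1)).add h1
      simpa using this
    have h3 := (Real.continuous_sqrt.tendsto 1).comp h2
    rw [Real.sqrt_one] at h3
    exact h3
  exact (Filter.limsup_le_limsup hev).trans_eq hlim.limsup_eq
end

section
/- Let H be a real Hilbert space, y_1, y_2, ... ∈ H with ‖y_i‖² ≤ c₁ ≤ 1/2 for all i, and ȳ_i = (y_1+...+y_i)/i with ȳ_0 = 0. Then for n ≥ 2, ∑_{i=1}^n ⟨ȳ_{i−1}, y_i⟩ ≥ (1/2)∑_{i=1}^n ‖ȳ_i‖² + (n/2)‖ȳ_n‖² − (c₁/2)(3 + log(n−1)). -/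
open scoped RealInnerProductSpace

theorem hilbert_summation_lower_bound {H : Type*} [NormedAddCommGroup H]
    [InnerProductSpace ℝ H] [CompleteSpace H]
    (c₁ : ℝ) (hc1 : c₁ ≤ 1 / 2)
    (y : ℕ → H) (hy : ∀ i, ‖y i‖ ^ 2 ≤ c₁)
    (ybar : ℕ → H) (hybar : ∀ i, ybar i = (i : ℝ)⁻¹ • ∑ j ∈ Finset.Icc 1 i, y j)
    (n : ℕ) (hn : 2 ≤ n) :
    ∑ i ∈ Finset.Icc 1 n, ⟪ybar (i - 1), y i⟫ ≥
      (1 / 2) * ∑ i ∈ Finset.Icc 1 n, ‖ybar i‖ ^ 2 + ((n : ℝ) / 2) * ‖ybar n‖ ^ 2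
      - (c₁ / 2) * (3 + Real.log ((n : ℝ) - 1)) := by
  have hc0 : 0 ≤ c₁ := le_trans (sq_nonneg ‖y 0‖) (hy 0)
  have hb0 : ybar 0 = 0 := by simp [hybar]
  have hb1 : ybar 1 = y 1 := by simp [hybar]
  -- recurrence
  have yrec : ∀ k : ℕ, y (k + 1) = ((k : ℝ) + 1) • ybar (k + 1) - (k : ℝ) • ybar k := by
    intro k
    have hsum : ∑ j ∈ Finset.Icc 1 (k + 1), y j = (∑ j ∈ Finset.Icc 1 k, y j) + y (k + 1) :=
      Finset.sum_Icc_succ_top (Nat.succ_le_succ (Nat.zero_le k)) y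
    rw [hybar (k + 1), hybar k, hsum]
    rcases Nat.eq_zero_or_pos k with h | h
    · subst h; simp
    · have hk : (k : ℝ) ≠ 0 := Nat.cast_ne_zero.mpr h.ne'
      have hk1 : ((k : ℝ) + 1) ≠ 0 := by positivity
      push_cast
      rw [smul_smul, smul_smul, mul_inv_cancel₀ hk1, mul_inv_cancel₀ hk, one_smul, one_smul]
      abel
  -- key algebraic identity
  have key : ∀ k : ℕ, 2 * (k : ℝ) * ⟪ybar k, y (k + 1)⟫ =
      ((k : ℝ) + 1) ^ 2 * ‖ybar (k + 1)‖ ^ 2 - (k : ℝ) ^ 2 * ‖ybar k‖ ^ 2 - ‖y (k + 1)‖ ^ 2 := by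
    intro k
    rw [yrec k]
    set u := ybar k
    set v := ybar (k + 1)
    rw [← real_inner_self_eq_norm_sq, ← real_inner_self_eq_norm_sq, ← real_inner_self_eq_norm_sq]
    simp only [inner_sub_left, inner_sub_right, real_inner_smul_left, real_inner_smul_right,
      real_inner_comm v u]
    ring
  -- per-term lower bound
  have step : ∀ k : ℕ, 1 ≤ k →
      ((k : ℝ) + 2) / 2 * ‖ybar (k + 1)‖ ^ 2 - (k : ℝ) / 2 * ‖ybar k‖ ^ 2 - c₁ / (2 * (k : ℝ))
        ≤ ⟪ybar k, y (k + 1)⟫ := by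
    intro k hk
    have hk0 : (0 : ℝ) < (k : ℝ) := by exact_mod_cast hk
    have h2k : (0 : ℝ) < 2 * (k : ℝ) := by linarith
    have h1 : 2 * (k : ℝ) * ⟪ybar k, y (k + 1)⟫ ≥
        2 * (k : ℝ) * (((k : ℝ) + 2) / 2 * ‖ybar (k + 1)‖ ^ 2 - (k : ℝ) / 2 * ‖ybar k‖ ^ 2)
          - c₁ := by
      nlinarith [key k, hy (k + 1), sq_nonneg ‖ybar (k + 1)‖]
    have h2 : ((k : ℝ) + 2) / 2 * ‖ybar (k + 1)‖ ^ 2 - (k : ℝ) / 2 * ‖ybar k‖ ^ 2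
        - c₁ / (2 * (k : ℝ)) =
        (2 * (k : ℝ) * (((k : ℝ) + 2) / 2 * ‖ybar (k + 1)‖ ^ 2 - (k : ℝ) / 2 * ‖ybar k‖ ^ 2)
          - c₁) / (2 * (k : ℝ)) := by
      field_simp
    rw [h2, div_le_iff₀ h2k]
    nlinarith [h1]
  obtain ⟨m, rfl⟩ : ∃ m, n = m + 2 := ⟨n - 2, by omega⟩
  -- rewrite LHS sum
  have hL : ∑ i ∈ Finset.Icc 1 (m + 2), ⟪ybar (i - 1), y i⟫ =
      ∑ k ∈ Finset.range (m + 1), ⟪ybar (k + 1), y (k + 2)⟫ := by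
    rw [← Finset.Ico_add_one_right_eq_Icc, Finset.sum_Ico_eq_sum_range]
    simp only [Nat.add_sub_cancel]
    rw [Finset.sum_range_succ']
    have h0 : (⟪ybar (1 + 0 - 1), y (1 + 0)⟫ : ℝ) = 0 := by norm_num [hb0]
    rw [h0, add_zero]
    apply Finset.sum_congr rfl
    intro k _
    have e1 : 1 + (k + 1) - 1 = k + 1 := by omega
    have e2 : 1 + (k + 1) = k + 2 := by omega
    rw [e1, e2]
  -- rewrite norm sum
  have hN : ∑ i ∈ Finset.Icc 1 (m + 2), ‖ybar i‖ ^ 2 =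
      (∑ k ∈ Finset.range (m + 1), ‖ybar (k + 2)‖ ^ 2) + ‖ybar 1‖ ^ 2 := by
    rw [← Finset.Ico_add_one_right_eq_Icc, Finset.sum_Ico_eq_sum_range]
    simp only [Nat.add_sub_cancel]
    rw [Finset.sum_range_succ']
    refine congrArg₂ (· + ·) (Finset.sum_congr rfl fun k _ => ?_) rfl
    have e2 : 1 + (k + 1) = k + 2 := by omega
    rw [e2]
  set F : ℕ → ℝ := fun k => ((k : ℝ) + 1) / 2 * ‖ybar (k + 1)‖ ^ 2 with hF
  -- lower bound the shifted sum
  have hsumstep : ∑ k ∈ Finset.range (m + 1),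
      ((1 : ℝ) / 2 * ‖ybar (k + 2)‖ ^ 2 + (F (k + 1) - F k) - c₁ / (2 * ((k : ℝ) + 1)))
      ≤ ∑ k ∈ Finset.range (m + 1), ⟪ybar (k + 1), y (k + 2)⟫ := by
    apply Finset.sum_le_sum
    intro k _
    have h := step (k + 1) (by omega)
    have he : ((1 : ℝ) / 2 * ‖ybar (k + 2)‖ ^ 2 + (F (k + 1) - F k) - c₁ / (2 * ((k : ℝ) + 1)))
        = (((k : ℝ) + 1) + 2) / 2 * ‖ybar (k + 2)‖ ^ 2
          - ((k : ℝ) + 1) / 2 * ‖ybar (k + 1)‖ ^ 2 - c₁ / (2 * ((k : ℝ) + 1)) := by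
      simp only [hF]
      push_cast
      ring
    rw [he]
    push_cast at h
    exact h
  have hsplit : ∑ k ∈ Finset.range (m + 1),
      ((1 : ℝ) / 2 * ‖ybar (k + 2)‖ ^ 2 + (F (k + 1) - F k) - c₁ / (2 * ((k : ℝ) + 1)))
      = (1 / 2) * (∑ k ∈ Finset.range (m + 1), ‖ybar (k + 2)‖ ^ 2) + (F (m + 1) - F 0)
        - ∑ k ∈ Finset.range (m + 1), c₁ / (2 * ((k : ℝ) + 1)) := by
    rw [Finset.sum_sub_distrib, Finset.sum_add_distrib, Finset.sum_range_sub F,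
      ← Finset.mul_sum]
  -- harmonic sum bound
  have hharm : ∑ k ∈ Finset.range (m + 1), c₁ / (2 * ((k : ℝ) + 1)) ≤
      c₁ / 2 * (1 + Real.log ((m : ℝ) + 1)) := by
    have h1 : ∑ k ∈ Finset.range (m + 1), c₁ / (2 * ((k : ℝ) + 1)) =
        c₁ / 2 * ((harmonic (m + 1) : ℝ)) := by
      rw [harmonic]
      push_cast
      rw [Finset.mul_sum]
      apply Finset.sum_congr rfl
      intro k _
      have hk : ((k : ℝ) + 1) ≠ 0 := by positivity
      field_simp
    rw [h1]
    have h2 := harmonic_le_one_add_log (m + 1)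
    have h3 : ((m + 1 : ℕ) : ℝ) = (m : ℝ) + 1 := by push_cast; ring
    rw [h3] at h2
    have := mul_le_mul_of_nonneg_left h2 (by linarith : (0 : ℝ) ≤ c₁ / 2)
    linarith
  have hF0 : F 0 = 1 / 2 * ‖ybar 1‖ ^ 2 := by simp [hF]
  have hFm : F (m + 1) = ((m : ℝ) + 2) / 2 * ‖ybar (m + 2)‖ ^ 2 := by
    show (((m + 1 : ℕ) : ℝ) + 1) / 2 * ‖ybar (m + 2)‖ ^ 2 = _
    push_cast; ring
  have hy1 : ‖ybar 1‖ ^ 2 ≤ c₁ := by rw [hb1]; exact hy 1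
  have hlog : Real.log (((m + 2 : ℕ) : ℝ) - 1) = Real.log ((m : ℝ) + 1) := by
    push_cast
    congr 1
    ring
  rw [ge_iff_le, hL, hN, hlog]
  have hcast : ((m + 2 : ℕ) : ℝ) = (m : ℝ) + 2 := by push_cast; ring
  rw [hcast]
  linarith [hsumstep, hsplit.symm.le, hsplit.le, hharm]
end

section
/- Let X_1, X_2, ... be a bounded martingale difference sequence with |X_n| ≤ 1 almost surely, adapted to a filtration, and let X̄_n = (X_1+...+X_n)/n. Then for any α > 1/2, √n·|X̄_n|/(log n)^α → 0 almost surely as n → ∞. -/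
open MeasureTheory Filter
open scoped ENNReal NNReal

set_option maxHeartbeats 1000000
set_option linter.unusedSectionVars false

section AzumaAux

variable {Ω : Type*} {m : MeasurableSpace Ω} {μ : Measure Ω}
    [IsProbabilityMeasure μ] {ℱ : Filtration ℕ m} {X : ℕ → Ω → ℝ}

private lemma az_Sbdd (hbdd : ∀ n, ∀ᵐ ω ∂μ, |X n ω| ≤ 1) :
    ∀ᵐ ω ∂μ, ∀ n, |∑ i ∈ Finset.Icc 1 n, X i ω| ≤ n := by
  have h := (ae_all_iff.2 hbdd)
  filter_upwards [h] with ω hω n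
  calc |∑ i ∈ Finset.Icc 1 n, X i ω| ≤ ∑ i ∈ Finset.Icc 1 n, |X i ω| :=
        Finset.abs_sum_le_sum_abs _ _
    _ ≤ ∑ i ∈ Finset.Icc 1 n, 1 := Finset.sum_le_sum fun i _ => hω i
    _ = n := by simp

private lemma az_sq_int (hmart : Martingale (fun n ω => ∑ i ∈ Finset.Icc 1 n, X i ω) ℱ μ)
    (hbdd : ∀ n, ∀ᵐ ω ∂μ, |X n ω| ≤ 1) (n : ℕ) :
    Integrable (fun ω => (∑ i ∈ Finset.Icc 1 n, X i ω)^2) μ := by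
  have h := (hmart.integrable n).bdd_mul
    ((hmart.stronglyAdapted n).mono (ℱ.le n)).aestronglyMeasurable
    (by filter_upwards [az_Sbdd hbdd] with ω hω; simpa [Real.norm_eq_abs] using hω n)
  simpa [sq] using h

private lemma az_X_eq (X : ℕ → Ω → ℝ) (n : ℕ) (ω : Ω) :
    X (n+1) ω = (∑ i ∈ Finset.Icc 1 (n+1), X i ω) - ∑ i ∈ Finset.Icc 1 n, X i ω := by
  rw [Finset.sum_Icc_succ_top (Nat.le_add_left 1 n)]; ring

private lemma az_orth (hmart : Martingale (fun n ω => ∑ i ∈ Finset.Icc 1 n, X i ω) ℱ μ)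
    (n : ℕ) (f : Ω → ℝ) (hf : StronglyMeasurable[ℱ n] f) (C : ℝ)
    (hC : ∀ᵐ ω ∂μ, |f ω| ≤ C) :
    ∫ ω, f ω * X (n+1) ω ∂μ = 0 := by
  have key : ∫ ω, f ω * (∑ i ∈ Finset.Icc 1 (n+1), X i ω) ∂μ
      = ∫ ω, f ω * (∑ i ∈ Finset.Icc 1 n, X i ω) ∂μ := by
    set S : ℕ → Ω → ℝ := fun n ω => ∑ i ∈ Finset.Icc 1 n, X i ω with hS
    have hC' : ∀ᵐ ω ∂μ, ‖f ω‖ ≤ C := by simpa [Real.norm_eq_abs] using hC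
    have hint : Integrable (S (n+1)) μ := hmart.integrable (n+1)
    have h1 : μ[f * S (n+1) | ℱ n] =ᵐ[μ] f * μ[S (n+1) | ℱ n] :=
      condExp_stronglyMeasurable_mul_of_bound (ℱ.le n) hf hint C hC'
    have h2 : μ[S (n+1) | ℱ n] =ᵐ[μ] S n := hmart.condExp_ae_eq (Nat.le_succ n)
    calc ∫ ω, f ω * S (n+1) ω ∂μ = ∫ ω, (μ[f * S (n+1) | ℱ n]) ω ∂μ :=
          (integral_condExp (ℱ.le n)).symm
      _ = ∫ ω, f ω * S n ω ∂μ := by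
          refine integral_congr_ae (h1.trans ?_)
          filter_upwards [h2] with ω hω
          simp [hω]
  have hC' : ∀ᵐ ω ∂μ, ‖f ω‖ ≤ C := by simpa [Real.norm_eq_abs] using hC
  have hfm : AEStronglyMeasurable f μ := (hf.mono (ℱ.le n)).aestronglyMeasurable
  have i1 : Integrable (fun ω => f ω * (∑ i ∈ Finset.Icc 1 (n+1), X i ω)) μ :=
    (hmart.integrable (n+1)).bdd_mul hfm hC'
  have i2 : Integrable (fun ω => f ω * (∑ i ∈ Finset.Icc 1 n, X i ω)) μ :=
    (hmart.integrable n).bdd_mul hfm hC'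
  have : ∫ ω, f ω * X (n+1) ω ∂μ
      = ∫ ω, (f ω * (∑ i ∈ Finset.Icc 1 (n+1), X i ω) - f ω * (∑ i ∈ Finset.Icc 1 n, X i ω)) ∂μ := by
    refine integral_congr_ae (Eventually.of_forall fun ω => ?_)
    simp only []
    rw [az_X_eq (X := X)]; ring
  rw [this, integral_sub i1 i2, key, sub_self]

private lemma az_Xsq_int (hmart : Martingale (fun n ω => ∑ i ∈ Finset.Icc 1 n, X i ω) ℱ μ)
    (hbdd : ∀ n, ∀ᵐ ω ∂μ, |X n ω| ≤ 1) (n : ℕ) :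
    Integrable (fun ω => (X (n+1) ω)^2) μ := by
  have hXint : Integrable (X (n+1)) μ := by
    have := (hmart.integrable (n+1)).sub (hmart.integrable n)
    refine this.congr (Eventually.of_forall fun ω => ?_)
    exact (az_X_eq X n ω).symm
  have := hXint.bdd_mul hXint.aestronglyMeasurable
    (c := 1) (by filter_upwards [hbdd (n+1)] with ω hω; simpa [Real.norm_eq_abs] using hω)
  simpa [sq] using this

private lemma az_SX_int (hmart : Martingale (fun n ω => ∑ i ∈ Finset.Icc 1 n, X i ω) ℱ μ)
    (hbdd : ∀ n, ∀ᵐ ω ∂μ, |X n ω| ≤ 1) (n : ℕ) :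
    Integrable (fun ω => (∑ i ∈ Finset.Icc 1 n, X i ω) * X (n+1) ω) μ := by
  have hXint : Integrable (X (n+1)) μ := by
    have := (hmart.integrable (n+1)).sub (hmart.integrable n)
    refine this.congr (Eventually.of_forall fun ω => ?_)
    exact (az_X_eq X n ω).symm
  refine hXint.bdd_mul ((hmart.stronglyAdapted n).mono (ℱ.le n)).aestronglyMeasurable (c := n) ?_
  filter_upwards [az_Sbdd hbdd] with ω hω
  simpa [Real.norm_eq_abs] using hω n

private lemma az_var (hmart : Martingale (fun n ω => ∑ i ∈ Finset.Icc 1 n, X i ω) ℱ μ)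
    (hbdd : ∀ n, ∀ᵐ ω ∂μ, |X n ω| ≤ 1) :
    ∀ n, ∫ ω, (∑ i ∈ Finset.Icc 1 n, X i ω)^2 ∂μ ≤ n := by
  intro n
  induction n with
  | zero => simp
  | succ n ih =>
    have hXsq := az_Xsq_int hmart hbdd n
    have hSX := az_SX_int hmart hbdd n
    have hSsq := az_sq_int hmart hbdd n
    have hsplit : ∫ ω, (∑ i ∈ Finset.Icc 1 (n+1), X i ω)^2 ∂μ
        = ∫ ω, (∑ i ∈ Finset.Icc 1 n, X i ω)^2 ∂μ
          + (2 * ∫ ω, (∑ i ∈ Finset.Icc 1 n, X i ω) * X (n+1) ω ∂μ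
          + ∫ ω, (X (n+1) ω)^2 ∂μ) := by
      calc ∫ ω, (∑ i ∈ Finset.Icc 1 (n+1), X i ω)^2 ∂μ
          = ∫ ω, ((∑ i ∈ Finset.Icc 1 n, X i ω)^2
              + (2 * ((∑ i ∈ Finset.Icc 1 n, X i ω) * X (n+1) ω) + (X (n+1) ω)^2)) ∂μ := by
            refine integral_congr_ae (Eventually.of_forall fun ω => ?_)
            beta_reduce
            rw [az_X_eq X n ω]; ring
        _ = ∫ ω, (∑ i ∈ Finset.Icc 1 n, X i ω)^2 ∂μ
              + ∫ ω, (2 * ((∑ i ∈ Finset.Icc 1 n, X i ω) * X (n+1) ω) + (X (n+1) ω)^2) ∂μ :=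
            integral_add hSsq ((hSX.const_mul 2).add hXsq)
        _ = _ := by rw [integral_add (hSX.const_mul 2) hXsq, integral_const_mul]
    have horth : ∫ ω, (∑ i ∈ Finset.Icc 1 n, X i ω) * X (n+1) ω ∂μ = 0 := by
      refine az_orth hmart n _ (hmart.stronglyAdapted n) n ?_
      filter_upwards [az_Sbdd hbdd] with ω hω using hω n
    have hXsq_le : ∫ ω, (X (n+1) ω)^2 ∂μ ≤ 1 := by
      have : ∀ᵐ ω ∂μ, (X (n+1) ω)^2 ≤ 1 := by
        filter_upwards [hbdd (n+1)] with ω hω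
        nlinarith [hω, abs_nonneg (X (n+1) ω), le_abs_self (X (n+1) ω), neg_abs_le (X (n+1) ω)]
      calc ∫ ω, (X (n+1) ω)^2 ∂μ ≤ ∫ (_ : Ω), (1:ℝ) ∂μ := integral_mono_ae hXsq (integrable_const 1) this
        _ = 1 := by simp
    rw [hsplit, horth]
    push_cast
    linarith

private lemma az_subm (hmart : Martingale (fun n ω => ∑ i ∈ Finset.Icc 1 n, X i ω) ℱ μ)
    (hbdd : ∀ n, ∀ᵐ ω ∂μ, |X n ω| ≤ 1) :
    Submartingale (fun n ω => (∑ i ∈ Finset.Icc 1 n, X i ω)^2) ℱ μ := by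
  refine submartingale_of_setIntegral_le_succ
    (fun n => (hmart.stronglyAdapted n).pow 2) (fun n => az_sq_int hmart hbdd n) ?_
  intro n s hs
  have hXsq := az_Xsq_int hmart hbdd n
  have hSX := az_SX_int hmart hbdd n
  have hSsq := az_sq_int hmart hbdd n
  have i1 : Integrable (fun ω => (∑ i ∈ Finset.Icc 1 n, X i ω)^2) (μ.restrict s) := hSsq.restrict
  have i2 : Integrable (fun ω => 2 * ((∑ i ∈ Finset.Icc 1 n, X i ω) * X (n+1) ω)) (μ.restrict s) :=
    hSX.restrict.const_mul 2
  have i3 : Integrable (fun ω => (X (n+1) ω)^2) (μ.restrict s) := hXsq.restrict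
  have hind : ∫ ω in s, (∑ i ∈ Finset.Icc 1 (n+1), X i ω)^2 ∂μ
      = ∫ ω in s, (∑ i ∈ Finset.Icc 1 n, X i ω)^2 ∂μ
        + (2 * ∫ ω in s, (∑ i ∈ Finset.Icc 1 n, X i ω) * X (n+1) ω ∂μ
        + ∫ ω in s, (X (n+1) ω)^2 ∂μ) := by
    have e0 : ∫ ω in s, (∑ i ∈ Finset.Icc 1 (n+1), X i ω)^2 ∂μ
        = ∫ ω in s, ((∑ i ∈ Finset.Icc 1 n, X i ω)^2
            + (2 * ((∑ i ∈ Finset.Icc 1 n, X i ω) * X (n+1) ω) + (X (n+1) ω)^2)) ∂μ := by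
      refine integral_congr_ae (Eventually.of_forall fun ω => ?_)
      beta_reduce
      rw [az_X_eq X n ω]; ring
    have e1 : ∫ ω in s, ((∑ i ∈ Finset.Icc 1 n, X i ω)^2
            + (2 * ((∑ i ∈ Finset.Icc 1 n, X i ω) * X (n+1) ω) + (X (n+1) ω)^2)) ∂μ
        = ∫ ω in s, (∑ i ∈ Finset.Icc 1 n, X i ω)^2 ∂μ
            + ∫ ω in s, (2 * ((∑ i ∈ Finset.Icc 1 n, X i ω) * X (n+1) ω) + (X (n+1) ω)^2) ∂μ :=
      integral_add i1 (i2.add i3)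
    have e2 : ∫ ω in s, (2 * ((∑ i ∈ Finset.Icc 1 n, X i ω) * X (n+1) ω) + (X (n+1) ω)^2) ∂μ
        = 2 * ∫ ω in s, (∑ i ∈ Finset.Icc 1 n, X i ω) * X (n+1) ω ∂μ
            + ∫ ω in s, (X (n+1) ω)^2 ∂μ := by
      rw [integral_add i2 i3, integral_const_mul]
    rw [e0, e1, e2]
  have horth : ∫ ω in s, (∑ i ∈ Finset.Icc 1 n, X i ω) * X (n+1) ω ∂μ = 0 := by
    have heq : ∫ ω in s, (∑ i ∈ Finset.Icc 1 n, X i ω) * X (n+1) ω ∂μ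
        = ∫ ω, (s.indicator (fun ω => ∑ i ∈ Finset.Icc 1 n, X i ω)) ω * X (n+1) ω ∂μ := by
      rw [← integral_indicator (ℱ.le n s hs)]
      refine integral_congr_ae (Eventually.of_forall fun ω => ?_)
      by_cases hω : ω ∈ s <;> simp [hω, Set.indicator_of_mem, Set.indicator_of_notMem]
    rw [heq]
    refine az_orth hmart n _ ((hmart.stronglyAdapted n).indicator hs) n ?_
    filter_upwards [az_Sbdd hbdd] with ω hω
    by_cases hω' : ω ∈ s
    · simpa [Set.indicator_of_mem hω'] using hω n
    · simp only [Set.indicator_of_notMem hω', abs_zero]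
      positivity
  have hXsq_nonneg : 0 ≤ ∫ ω in s, (X (n+1) ω)^2 ∂μ :=
    integral_nonneg fun ω => sq_nonneg _
  rw [hind, horth]
  linarith

private lemma az_max (hmart : Martingale (fun n ω => ∑ i ∈ Finset.Icc 1 n, X i ω) ℱ μ)
    (hbdd : ∀ n, ∀ᵐ ω ∂μ, |X n ω| ≤ 1) (L : ℝ) (hL : 0 < L) (N : ℕ) :
    μ {ω | ∃ k ≤ N, L ≤ |∑ i ∈ Finset.Icc 1 k, X i ω|} ≤ ENNReal.ofReal (N / L^2) := by
  set ε : NNReal := ⟨L^2, sq_nonneg L⟩ with hε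
  have hmax := maximal_ineq (az_subm hmart hbdd) (fun n ω => sq_nonneg _) (ε := ε) N
  have hsetEq : {ω | (ε : ℝ) ≤ (Finset.range (N + 1)).sup' Finset.nonempty_range_add_one
        fun k => (∑ i ∈ Finset.Icc 1 k, X i ω)^2}
      = {ω | ∃ k ≤ N, L ≤ |∑ i ∈ Finset.Icc 1 k, X i ω|} := by
    ext ω
    simp only [Set.mem_setOf_eq, Finset.le_sup'_iff, Finset.mem_range, Nat.lt_succ_iff]
    constructor
    · rintro ⟨k, hk, hle⟩
      refine ⟨k, hk, ?_⟩
      have : L^2 ≤ |∑ i ∈ Finset.Icc 1 k, X i ω|^2 := by rwa [sq_abs]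
      exact (pow_le_pow_iff_left₀ hL.le (abs_nonneg _) two_ne_zero).1 this
    · rintro ⟨k, hk, hle⟩
      refine ⟨k, hk, ?_⟩
      have : L^2 ≤ |∑ i ∈ Finset.Icc 1 k, X i ω|^2 :=
        (pow_le_pow_iff_left₀ hL.le (abs_nonneg _) two_ne_zero).2 hle
      rwa [sq_abs] at this
  rw [hsetEq] at hmax
  have hint : ∫ ω in {ω | ∃ k ≤ N, L ≤ |∑ i ∈ Finset.Icc 1 k, X i ω|},
      (∑ i ∈ Finset.Icc 1 N, X i ω)^2 ∂μ ≤ N := by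
    refine le_trans (setIntegral_le_integral (az_sq_int hmart hbdd N) ?_) (az_var hmart hbdd N)
    exact Eventually.of_forall fun ω => sq_nonneg _
  have hεpos : (0:ℝ) < ε := by rw [hε]; exact pow_pos hL 2
  have hne0 : (ε : ℝ≥0∞) ≠ 0 := by
    simp only [ne_eq, ENNReal.coe_eq_zero]
    exact fun hc => by simpa [hc] using hεpos
  have h2 : μ {ω | ∃ k ≤ N, L ≤ |∑ i ∈ Finset.Icc 1 k, X i ω|} * (ε : ℝ≥0∞)
      ≤ ENNReal.ofReal N := by
    rw [mul_comm, ← smul_eq_mul, ← ENNReal.smul_def]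
    exact le_trans hmax (ENNReal.ofReal_le_ofReal hint)
  have h3 : μ {ω | ∃ k ≤ N, L ≤ |∑ i ∈ Finset.Icc 1 k, X i ω|} ≤ ENNReal.ofReal N / ε :=
    (ENNReal.le_div_iff_mul_le (Or.inl hne0) (Or.inl ENNReal.coe_ne_top)).2 h2
  refine le_trans h3 (le_of_eq ?_)
  rw [ENNReal.ofReal_div_of_pos (by positivity : (0:ℝ) < L^2)]
  congr 1
  rw [ENNReal.ofReal_eq_coe_nnreal (sq_nonneg L)]
  rfl

private lemma az_L_pos {α ε : ℝ} (hε : 0 < ε) (hα : 1/2 < α) {j : ℕ} (hj : 1 ≤ j) :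
    0 < ε * (Real.sqrt ((2:ℝ)^j) * Real.log ((2:ℝ)^j) ^ α) := by
  have h1 : (1:ℝ) < (2:ℝ)^j := one_lt_pow₀ (by norm_num) (by omega)
  have hlog : 0 < Real.log ((2:ℝ)^j) := Real.log_pos h1
  have := Real.rpow_pos_of_pos hlog α
  have hsq : 0 < Real.sqrt ((2:ℝ)^j) := Real.sqrt_pos.2 (by positivity)
  positivity

private lemma az_ratio {α ε : ℝ} (hε : 0 < ε) (hα : 1/2 < α) {j : ℕ} (hj : 1 ≤ j) :
    ((2^(j+1) : ℕ) : ℝ) / (ε * (Real.sqrt ((2:ℝ)^j) * Real.log ((2:ℝ)^j) ^ α))^2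
      = (2 / (ε^2 * Real.log 2 ^ (2*α))) * (j:ℝ) ^ (-(2*α)) := by
  have hlog2 : (0:ℝ) < Real.log 2 := Real.log_pos (by norm_num)
  have hjR : (0:ℝ) < (j:ℝ) := by exact_mod_cast hj
  have hlogpow : Real.log ((2:ℝ)^j) = (j:ℝ) * Real.log 2 := by
    rw [Real.log_pow]

  have hsq : Real.sqrt ((2 :ℝ)^j) ^ 2 = (2:ℝ)^j := Real.sq_sqrt (by positivity)
  have hrp2 : (Real.log ((2:ℝ)^j) ^ α) ^ 2 = (j:ℝ)^(2*α) * Real.log 2 ^ (2*α) := by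
    rw [hlogpow, ← Real.rpow_natCast (((j:ℝ) * Real.log 2) ^ α) 2,
      ← Real.rpow_mul (by positivity)]
    rw [Real.mul_rpow hjR.le hlog2.le]
    norm_num [mul_comm]
  have h2j : ((2:ℝ))^j ≠ 0 := by positivity
  have hjα : (0:ℝ) < (j:ℝ)^(2*α) := Real.rpow_pos_of_pos hjR _
  have hlα : (0:ℝ) < Real.log 2 ^ (2*α) := Real.rpow_pos_of_pos hlog2 _
  have hnum : ((2^(j+1) : ℕ) : ℝ) = 2 * (2:ℝ)^j := by push_cast [pow_succ]; ring
  rw [hnum, mul_pow, mul_pow, hsq, hrp2, Real.rpow_neg hjR.le]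
  field_simp

private lemma az_blocks (hmart : Martingale (fun n ω => ∑ i ∈ Finset.Icc 1 n, X i ω) ℱ μ)
    (hbdd : ∀ n, ∀ᵐ ω ∂μ, |X n ω| ≤ 1) (α : ℝ) (hα : 1/2 < α) (ε : ℝ) (hε : 0 < ε) :
    ∀ᵐ ω ∂μ, ∀ᶠ j : ℕ in atTop, ∀ k ≤ 2^(j+1),
      |∑ i ∈ Finset.Icc 1 k, X i ω| < ε * (Real.sqrt ((2:ℝ)^j) * Real.log ((2:ℝ)^j) ^ α) := by
  set L : ℕ → ℝ := fun j => ε * (Real.sqrt ((2:ℝ)^j) * Real.log ((2:ℝ)^j) ^ α) with hL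
  set A : ℕ → Set Ω := fun j => {ω | ∃ k ≤ 2^(j+1), L j ≤ |∑ i ∈ Finset.Icc 1 k, X i ω|} with hA
  set c : ℝ := 2 / (ε^2 * Real.log 2 ^ (2*α)) with hc
  have hcpos : 0 ≤ c := by
    have hlog2 : (0:ℝ) < Real.log 2 := Real.log_pos (by norm_num)
    have := Real.rpow_pos_of_pos hlog2 (2*α)
    positivity
  have hbound : ∀ j : ℕ, 1 ≤ j → μ (A j) ≤ ENNReal.ofReal (c * (j:ℝ) ^ (-(2*α))) := by
    intro j hj
    have h1 := az_max hmart hbdd (L j) (az_L_pos hε hα hj) (2^(j+1))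
    rwa [az_ratio hε hα hj] at h1
  have hsum : Summable (fun j : ℕ => c * (j:ℝ) ^ (-(2*α))) := by
    refine Summable.mul_left c (Real.summable_nat_rpow.2 ?_)
    linarith
  have hsum' : Summable (fun j : ℕ => c * ((j+1 : ℕ):ℝ) ^ (-(2*α))) :=
    (summable_nat_add_iff 1).2 hsum
  have htsum : ∑' j : ℕ, μ (A (j+1)) ≠ ∞ := by
    refine ne_top_of_le_ne_top ?_ (ENNReal.tsum_le_tsum
      (fun j => hbound (j+1) (Nat.le_add_left 1 j)))
    rw [← ENNReal.ofReal_tsum_of_nonneg (fun j => by positivity) hsum']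
    exact ENNReal.ofReal_ne_top
  have hBC := ae_eventually_notMem (μ := μ) htsum
  filter_upwards [hBC] with ω hω
  rw [eventually_atTop] at hω ⊢
  obtain ⟨J, hJ⟩ := hω
  refine ⟨J + 1, fun j hj k hk => ?_⟩
  have hj1 : ∃ j', j = j' + 1 := ⟨j - 1, by omega⟩
  obtain ⟨j', rfl⟩ := hj1
  have := hJ j' (by omega)
  rw [hA] at this
  simp only [Set.mem_setOf_eq, not_exists, not_and, not_le] at this
  exact this k hk

end AzumaAux

theorem azuma_slln {Ω : Type*} {m : MeasurableSpace Ω} {μ : Measure Ω}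
    [IsProbabilityMeasure μ] (ℱ : Filtration ℕ m)
    (X : ℕ → Ω → ℝ)
    (hmart : Martingale (fun n ω => ∑ i ∈ Finset.Icc 1 n, X i ω) ℱ μ)
    (hbdd : ∀ n, ∀ᵐ ω ∂μ, |X n ω| ≤ 1)
    (α : ℝ) (hα : 1 / 2 < α) :
    ∀ᵐ ω ∂μ, Filter.Tendsto
      (fun n : ℕ => Real.sqrt n * |(∑ i ∈ Finset.Icc 1 n, X i ω) / n| / (Real.log n) ^ α)
      Filter.atTop (nhds 0) := by
  have hα0 : (0:ℝ) ≤ α := by linarith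
  have hblocks : ∀ M : ℕ, ∀ᵐ ω ∂μ, ∀ᶠ j : ℕ in atTop, ∀ k ≤ 2^(j+1),
      |∑ i ∈ Finset.Icc 1 k, X i ω| < (1/(M+1)) * (Real.sqrt ((2:ℝ)^j) * Real.log ((2:ℝ)^j) ^ α) :=
    fun M => az_blocks hmart hbdd α hα (1/(M+1)) (by positivity)
  filter_upwards [ae_all_iff.2 hblocks] with ω hω
  rw [Metric.tendsto_atTop]
  intro ε hε
  obtain ⟨M, hM⟩ := exists_nat_one_div_lt hε
  have h1 := hω M
  rw [eventually_atTop] at h1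
  obtain ⟨J, hJ⟩ := h1
  refine ⟨2 ^ (max J 1), fun n hn => ?_⟩
  set j : ℕ := Nat.log 2 n with hj
  have hn2 : 2 ≤ n := le_trans (by calc 2 = 2^1 := rfl
    _ ≤ 2^(max J 1) := Nat.pow_le_pow_right (by norm_num) (le_max_right J 1)) hn
  have hn0 : n ≠ 0 := by omega
  have hjge : max J 1 ≤ j := (Nat.le_log_iff_pow_le (by norm_num) hn0).2 hn
  have h2j : 2^j ≤ n := Nat.pow_log_le_self 2 hn0
  have hjlt : n < 2^(j+1) := Nat.lt_pow_succ_log_self (by norm_num) n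
  have hkey := hJ j (le_trans (le_max_left J 1) hjge) n (le_of_lt hjlt)
  -- real-number facts
  have h2jR : ((2:ℝ))^j ≤ (n:ℝ) := by exact_mod_cast h2j
  have h2jR1 : (1:ℝ) ≤ (2:ℝ)^j := by exact_mod_cast Nat.one_le_two_pow (n := j)
  have hnR : (0:ℝ) < (n:ℝ) := by positivity
  have hlog2j : (0:ℝ) ≤ Real.log ((2:ℝ)^j) := Real.log_nonneg h2jR1
  have hlogn : (0:ℝ) < Real.log n := Real.log_pos (by exact_mod_cast hn2)
  have hmono : (1/(M+1):ℝ) * (Real.sqrt ((2:ℝ)^j) * Real.log ((2:ℝ)^j) ^ α)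
      ≤ (1/(M+1):ℝ) * (Real.sqrt n * Real.log n ^ α) := by
    have hs : Real.sqrt ((2:ℝ)^j) ≤ Real.sqrt n := Real.sqrt_le_sqrt h2jR
    have hl : Real.log ((2:ℝ)^j) ^ α ≤ Real.log n ^ α :=
      Real.rpow_le_rpow hlog2j (Real.log_le_log (by positivity) h2jR) hα0
    have h1 : (0:ℝ) ≤ Real.sqrt ((2:ℝ)^j) := Real.sqrt_nonneg _
    have h2 : (0:ℝ) ≤ Real.log n ^ α := Real.rpow_nonneg hlogn.le _
    have : Real.sqrt ((2:ℝ)^j) * Real.log ((2:ℝ)^j) ^ α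
        ≤ Real.sqrt n * Real.log n ^ α := by
      refine mul_le_mul hs hl ?_ (Real.sqrt_nonneg _)
      exact Real.rpow_nonneg hlog2j _
    have hM0 : (0:ℝ) ≤ 1/(M+1) := by positivity
    exact mul_le_mul_of_nonneg_left this hM0
  have hSlt : |∑ i ∈ Finset.Icc 1 n, X i ω| < (1/(M+1):ℝ) * (Real.sqrt n * Real.log n ^ α) :=
    lt_of_lt_of_le hkey hmono
  -- rewrite the target quantity
  have hsq : Real.sqrt n * Real.sqrt n = (n:ℝ) := Real.mul_self_sqrt hnR.le
  have hsqpos : (0:ℝ) < Real.sqrt n := Real.sqrt_pos.2 hnR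
  have hlpos : (0:ℝ) < Real.log n ^ α := Real.rpow_pos_of_pos hlogn _
  have hfeq : Real.sqrt n * |(∑ i ∈ Finset.Icc 1 n, X i ω) / n| / (Real.log n) ^ α
      = |∑ i ∈ Finset.Icc 1 n, X i ω| / (Real.sqrt n * Real.log n ^ α) := by
    rw [abs_div, abs_of_pos hnR]
    have e : Real.sqrt n / (n:ℝ) = 1 / Real.sqrt n := Real.sqrt_div_self'
    calc Real.sqrt n * (|∑ i ∈ Finset.Icc 1 n, X i ω| / n) / Real.log n ^ α
        = |∑ i ∈ Finset.Icc 1 n, X i ω| * (Real.sqrt n / n) / Real.log n ^ α := by ring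
      _ = |∑ i ∈ Finset.Icc 1 n, X i ω| * (1 / Real.sqrt n) / Real.log n ^ α := by rw [e]
      _ = |∑ i ∈ Finset.Icc 1 n, X i ω| / (Real.sqrt n * Real.log n ^ α) := by ring
  rw [Real.dist_eq, sub_zero, hfeq, abs_of_nonneg (by positivity)]
  rw [div_lt_iff₀ (by positivity)]
  calc |∑ i ∈ Finset.Icc 1 n, X i ω| < (1/(M+1):ℝ) * (Real.sqrt n * Real.log n ^ α) := hSlt
    _ ≤ ε * (Real.sqrt n * Real.log n ^ α) := by
        refine mul_le_mul_of_nonneg_right (le_of_lt hM) (by positivity)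
end
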